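/- Let W = d(E_n) ⊆ F_2^{2n} with n > 2. Then for every weight-4 codeword w ∈ W there exist unique weight-2 codewords w_1, w_2 ∈ W^⊥ with w = w_1 + w_2; moreover, for any two distinct weight-2 codewords w_1, w_2 of W^⊥, the sum w_1 + w_2 is a weight-4 codeword of W. -/

import Mathlib

/-- Hamming weight of a binary word. -/
def wt {n : ℕ} (v : Fin n → ZMod 2) : ℕ :=
  (Finset.univ.filter (fun i => v i ≠ 0)).card

/-- Size of the intersection of the supports of two binary words. -/
def interCard {n : ℕ} (v w : Fin n → ZMod 2) : ℕ :=
  (Finset.univ.filter (fun i => v i ≠ 0 ∧ w i ≠ 0)).card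

/-- The doubling map `d : F₂ⁿ → F₂^{2n}`, `(c₁,…,cₙ) ↦ (c₁,c₁,c₂,c₂,…,cₙ,cₙ)`. -/
def dbl {n : ℕ} (c : Fin n → ZMod 2) : Fin (2 * n) → ZMod 2 :=
  fun i => c ⟨(i : ℕ) / 2, by have := i.isLt; omega⟩

/-- The map `e : F₂ⁿ → F₂^{2n}`, `(c₁,…,cₙ) ↦ (0,c₁,0,c₂,…,0,cₙ)`. -/
def emap {n : ℕ} (c : Fin n → ZMod 2) : Fin (2 * n) → ZMod 2 :=
  fun i => if (i : ℕ) % 2 = 1 then c ⟨(i : ℕ) / 2, by have := i.isLt; omega⟩ else 0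

/-- The even-weight code `𝓔ₙ ⊆ F₂ⁿ`. -/
def evenCode (n : ℕ) : Set (Fin n → ZMod 2) := {c | Even (wt c)}

lemma sum_range_two_mul {M : Type*} [AddCommMonoid M] (f : ℕ → M) (n : ℕ) :
    ∑ i ∈ Finset.range (2 * n), f i
      = ∑ k ∈ Finset.range n, (f (2 * k) + f (2 * k + 1)) := by
  induction n with
  | zero => simp
  | succ n ih =>
    have h : 2 * (n + 1) = 2 * n + 1 + 1 := by ring
    rw [h, Finset.sum_range_succ, Finset.sum_range_succ, ih,
      Finset.sum_range_succ (fun k => f (2 * k) + f (2 * k + 1)) n, add_assoc]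

lemma fin_sum_pair {M : Type*} [AddCommMonoid M] {n : ℕ} (f : Fin (2 * n) → M) :
    ∑ i, f i = ∑ k : Fin n, (f ⟨2 * k, by omega⟩ + f ⟨2 * k + 1, by omega⟩) := by
  classical
  set g : ℕ → M := fun i => if h : i < 2 * n then f ⟨i, h⟩ else 0 with hg
  have h1 : ∑ i, f i = ∑ i ∈ Finset.range (2 * n), g i := by
    rw [← Fin.sum_univ_eq_sum_range]
    exact Finset.sum_congr rfl fun i _ => by simp [hg, i.isLt]
  have h2 : ∑ k ∈ Finset.range n, (g (2 * k) + g (2 * k + 1))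
      = ∑ k : Fin n, (f ⟨2 * k, by omega⟩ + f ⟨2 * k + 1, by omega⟩) := by
    rw [← Fin.sum_univ_eq_sum_range (fun k => g (2 * k) + g (2 * k + 1)) n]
    refine Finset.sum_congr rfl fun k _ => ?_
    have h3 : 2 * (k : ℕ) < 2 * n := by omega
    have h4 : 2 * (k : ℕ) + 1 < 2 * n := by omega
    simp [hg, h3, h4]
  rw [h1, sum_range_two_mul, h2]

def sgl {n : ℕ} (k : Fin n) : Fin n → ZMod 2 := fun j => if j = k then 1 else 0

def pvec {n : ℕ} (k : Fin n) : Fin (2 * n) → ZMod 2 := dbl (sgl k)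

lemma zmod2_cases : ∀ a : ZMod 2, a = 0 ∨ a = 1 := by decide
lemma zmod2_ne_zero : ∀ a : ZMod 2, a ≠ 0 → a = 1 := by decide
lemma zmod2_add_self (a : ZMod 2) : a + a = 0 := by
  rcases zmod2_cases a with h | h <;> simp [h] <;> decide
lemma zmod2_add_eq_zero : ∀ a b : ZMod 2, a + b = 0 → a = b := by decide

lemma dbl_even {n : ℕ} (u : Fin n → ZMod 2) (k : Fin n) (h : 2 * (k : ℕ) < 2 * n) :
    dbl u ⟨2 * k, h⟩ = u k := by
  unfold dbl; congr 1; apply Fin.ext; simp only [Fin.val_mk]; omega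

lemma dbl_odd {n : ℕ} (u : Fin n → ZMod 2) (k : Fin n) (h : 2 * (k : ℕ) + 1 < 2 * n) :
    dbl u ⟨2 * k + 1, h⟩ = u k := by
  unfold dbl; congr 1; apply Fin.ext; simp only [Fin.val_mk]; omega

lemma wt_eq_sum {m : ℕ} (v : Fin m → ZMod 2) :
    wt v = ∑ i, if v i ≠ 0 then 1 else 0 := Finset.card_filter _ _

lemma wt_dbl {n : ℕ} (u : Fin n → ZMod 2) : wt (dbl u) = 2 * wt u := by
  rw [wt_eq_sum, wt_eq_sum, fin_sum_pair, Finset.mul_sum]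
  refine Finset.sum_congr rfl fun k _ => ?_
  rw [dbl_even, dbl_odd]
  ring

lemma sum_dbl_zero {n : ℕ} (u : Fin n → ZMod 2) : ∑ i, dbl u i = 0 := by
  rw [fin_sum_pair]
  refine Finset.sum_eq_zero fun k _ => ?_
  rw [dbl_even, dbl_odd, zmod2_add_self]

lemma sum_mul_dbl {n : ℕ} (v : Fin (2 * n) → ZMod 2) (c : Fin n → ZMod 2) :
    ∑ i, v i * dbl c i
      = ∑ k : Fin n, (v ⟨2 * k, by omega⟩ + v ⟨2 * k + 1, by omega⟩) * c k := by
  rw [fin_sum_pair (fun i => v i * dbl c i)]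
  refine Finset.sum_congr rfl fun k _ => ?_
  simp only [dbl_even, dbl_odd, add_mul]

lemma pvec_mem {n : ℕ} (k : Fin n) (c : Fin n → ZMod 2) :
    ∑ i, pvec k i * dbl c i = 0 := by
  have h : ∀ i, pvec k i * dbl c i = dbl (fun j => sgl k j * c j) i := fun i => rfl
  rw [Finset.sum_congr rfl fun i _ => h i]
  exact sum_dbl_zero _

lemma wt_sgl {n : ℕ} (k : Fin n) : wt (sgl k) = 1 := by
  unfold wt
  have : Finset.univ.filter (fun j => sgl k j ≠ 0) = {k} := by
    ext j; by_cases h : j = k <;> simp [sgl, h]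
  rw [this, Finset.card_singleton]

lemma wt_pvec {n : ℕ} (k : Fin n) : wt (pvec k) = 2 := by
  rw [pvec, wt_dbl, wt_sgl]

lemma wt_sgl_add {n : ℕ} {a b : Fin n} (hab : a ≠ b) : wt (sgl a + sgl b) = 2 := by
  unfold wt
  have : Finset.univ.filter (fun j => (sgl a + sgl b) j ≠ 0) = {a, b} := by
    ext j
    rw [Finset.mem_filter]
    simp only [Finset.mem_filter, Finset.mem_univ, true_and, Finset.mem_insert,
      Finset.mem_singleton, Pi.add_apply, sgl]
    rcases eq_or_ne j a with h | h <;> rcases eq_or_ne j b with h' | h'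
    · exact absurd (h.symm.trans h') hab
    · simp [h, h', hab]
    · simp [h, h', Ne.symm hab]
    · simp [h, h']
  rw [this, Finset.card_insert_of_notMem (by simpa using hab), Finset.card_singleton]

lemma dbl_add {n : ℕ} (u v : Fin n → ZMod 2) : dbl (u + v) = dbl u + dbl v := rfl

lemma eq_sgl_of_wt_one {n : ℕ} {c : Fin n → ZMod 2} (h : wt c = 1) :
    ∃ k, c = sgl k := by
  obtain ⟨k, hk⟩ := Finset.card_eq_one.mp h
  refine ⟨k, funext fun j => ?_⟩
  have hmem : ∀ j : Fin n, c j ≠ 0 ↔ j = k := by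
    intro j
    constructor
    · intro hj
      have : j ∈ Finset.univ.filter (fun i => c i ≠ 0) := by simp [hj]
      rw [hk] at this; simpa using this
    · rintro rfl
      have : j ∈ ({j} : Finset (Fin n)) := Finset.mem_singleton_self j
      rw [← hk] at this; simpa using this
  by_cases hj : j = k
  · subst hj
    have := zmod2_ne_zero _ ((hmem j).mpr rfl)
    simp [sgl, this]
  · have : c j = 0 := by
      by_contra hc; exact hj ((hmem j).mp hc)
    simp [sgl, hj, this]

lemma eq_sgl_add_of_wt_two {n : ℕ} {c : Fin n → ZMod 2} (h : wt c = 2) :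
    ∃ a b, a ≠ b ∧ c = sgl a + sgl b := by
  obtain ⟨a, b, hab, hk⟩ := Finset.card_eq_two.mp h
  refine ⟨a, b, hab, funext fun j => ?_⟩
  have hmem : ∀ j : Fin n, c j ≠ 0 ↔ (j = a ∨ j = b) := by
    intro j
    constructor
    · intro hj
      have : j ∈ Finset.univ.filter (fun i => c i ≠ 0) := by simp [hj]
      rw [hk] at this; simpa using this
    · intro hj
      have : j ∈ ({a, b} : Finset (Fin n)) := by simpa using hj
      rw [← hk] at this
      exact (Finset.mem_filter.mp this).2
  rcases eq_or_ne j a with rfl | hja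
  · have := zmod2_ne_zero _ ((hmem j).mpr (Or.inl rfl))
    simp [sgl, this, hab, Pi.add_apply]
  · rcases eq_or_ne j b with rfl | hjb
    · have := zmod2_ne_zero _ ((hmem j).mpr (Or.inr rfl))
      simp [sgl, this, hja, Pi.add_apply]
    · have : c j = 0 := by
        by_contra hc
        rcases (hmem j).mp hc with h' | h' <;> [exact hja h'; exact hjb h']
      simp [sgl, this, hja, hjb, Pi.add_apply]

lemma sgl_add_mem_even {n : ℕ} {a b : Fin n} (hab : a ≠ b) :
    sgl a + sgl b ∈ evenCode n := by
  show Even (wt (sgl a + sgl b))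
  rw [wt_sgl_add hab]; exact even_two

lemma dual_wt2 {n : ℕ} (hn : 2 < n) {v : Fin (2 * n) → ZMod 2}
    (hd : ∀ c ∈ evenCode n, ∑ i, v i * dbl c i = 0) (hw : wt v = 2) :
    ∃ k, v = pvec k := by
  have hn0 : 0 < n := by omega
  set y : Fin n → ZMod 2 :=
    fun k => v ⟨2 * k, by omega⟩ + v ⟨2 * k + 1, by omega⟩ with hy
  have hyc : ∀ a b : Fin n, y a = y b := by
    intro a b
    rcases eq_or_ne a b with rfl | hab
    · rfl
    · have h1 := hd _ (sgl_add_mem_even hab)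
      rw [sum_mul_dbl] at h1
      have h2 : ∑ k : Fin n, y k * (sgl a + sgl b) k = y a + y b := by
        simp [sgl, Pi.add_apply, mul_add, mul_ite, Finset.sum_add_distrib, hab]
      have h3 : y a + y b = 0 := by rw [← h2]; exact h1
      exact zmod2_add_eq_zero _ _ h3
  rcases zmod2_cases (y ⟨0, hn0⟩) with h0 | h0
  · -- all y k = 0 : v is a doubled word
    have hy0 : ∀ k, y k = 0 := fun k => (hyc k ⟨0, hn0⟩).trans h0
    set g : Fin n → ZMod 2 := fun k => v ⟨2 * k, by omega⟩ with hg
    have hvg : v = dbl g := by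
      funext i
      have hlt : (i : ℕ) / 2 < n := by have := i.isLt; omega
      show v i = v ⟨2 * ((i : ℕ) / 2), by omega⟩
      by_cases hpar : (i : ℕ) % 2 = 0
      · congr 1; apply Fin.ext; simp only [Fin.val_mk]; omega
      · have hkey := hy0 ⟨(i : ℕ) / 2, hlt⟩
        have heq : v ⟨2 * ((i : ℕ) / 2), by omega⟩
            = v ⟨2 * ((i : ℕ) / 2) + 1, by omega⟩ := zmod2_add_eq_zero _ _ hkey
        rw [heq]
        congr 1; apply Fin.ext; simp only [Fin.val_mk]; omega
    have hwg : wt g = 1 := by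
      have := hw
      rw [hvg, wt_dbl] at this
      omega
    obtain ⟨k, hk⟩ := eq_sgl_of_wt_one hwg
    exact ⟨k, by rw [hvg, hk]; rfl⟩
  · -- all y k = 1 : weight at least n, contradiction
    exfalso
    have hy1 : ∀ k, y k = 1 := fun k => (hyc k ⟨0, hn0⟩).trans h0
    have hsum : wt v = ∑ k : Fin n,
        ((if v ⟨2 * k, by omega⟩ ≠ 0 then 1 else 0)
          + (if v ⟨2 * k + 1, by omega⟩ ≠ 0 then 1 else 0)) := by
      rw [wt_eq_sum, fin_sum_pair]
    have hge : ∀ k : Fin n, 1 ≤ (if v ⟨2 * k, by omega⟩ ≠ 0 then 1 else 0)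
          + (if v ⟨2 * k + 1, by omega⟩ ≠ 0 then 1 else 0) := by
      intro k
      by_contra hc
      push_neg at hc
      have h1 : v ⟨2 * k, by omega⟩ = 0 := by
        by_contra h'; simp [h'] at hc
      have h2 : v ⟨2 * (k : ℕ) + 1, by omega⟩ = 0 := by
        by_contra h'; simp [h'] at hc
      have := hy1 k
      rw [hy] at this
      simp only [h1, h2, add_zero] at this
      exact absurd this (by decide)
    have : (n : ℕ) ≤ wt v := by
      rw [hsum]
      calc (n : ℕ) = ∑ _k : Fin n, 1 := by simp
        _ ≤ _ := Finset.sum_le_sum fun k _ => hge k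
    omega

lemma pvec_add_apply {n : ℕ} (p q a : Fin n) (h : 2 * (a : ℕ) < 2 * n) :
    (pvec p + pvec q) ⟨2 * a, h⟩
      = (if a = p then 1 else 0) + (if a = q then 1 else 0) := by
  show pvec p ⟨2 * a, h⟩ + pvec q ⟨2 * a, h⟩ = _
  rw [pvec, pvec, dbl_even, dbl_even]
  rfl

lemma pair_eq {n : ℕ} {p q a b : Fin n} (hpq : p ≠ q) (hab : a ≠ b)
    (h : pvec p + pvec q = pvec a + pvec b) :
    (p = a ∧ q = b) ∨ (p = b ∧ q = a) := by
  have key : ∀ x : Fin n, x = p ∨ x = q → x = a ∨ x = b := by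
    intro x hx
    have hxlt : 2 * (x : ℕ) < 2 * n := by have := x.isLt; omega
    have h1 := congrFun h ⟨2 * x, hxlt⟩
    rw [pvec_add_apply, pvec_add_apply] at h1
    by_contra hc
    push_neg at hc
    obtain ⟨hxa, hxb⟩ := hc
    rcases hx with rfl | rfl
    · simp [hxa, hxb, hpq] at h1
    · simp [hxa, hxb, Ne.symm hpq] at h1
  rcases key p (Or.inl rfl) with hp | hp <;> rcases key q (Or.inr rfl) with hq | hq
  · exact absurd (hp.trans hq.symm) hpq
  · exact Or.inl ⟨hp, hq⟩
  · exact Or.inr ⟨hp, hq⟩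
  · exact absurd (hp.trans hq.symm) hpq

lemma wt_zero_fun {m : ℕ} : wt (0 : Fin m → ZMod 2) = 0 := by simp [wt]

lemma pvec_add_self {n : ℕ} (p : Fin n) : pvec p + pvec p = 0 := by
  funext i; exact zmod2_add_self _


/-- for `n > 2` and `W = d(𝓔ₙ)`: every weight-4 codeword of `W` is
uniquely the sum of two weight-2 codewords of `W^⊥`, and the sum of any two distinct
weight-2 codewords of `W^⊥` is a weight-4 codeword of `W`. -/
theorem weight_four_decomposition (n : ℕ) (hn : 2 < n) :
    let dualW : Set (Fin (2 * n) → ZMod 2) :=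
      {x | ∀ w ∈ dbl '' evenCode n, ∑ i, x i * w i = 0}
    (∀ w ∈ dbl '' evenCode n, wt w = 4 →
      ∃ w₁ w₂ : Fin (2 * n) → ZMod 2,
        w₁ ∈ dualW ∧ w₂ ∈ dualW ∧ wt w₁ = 2 ∧ wt w₂ = 2 ∧ w = w₁ + w₂ ∧
        ∀ v₁ v₂ : Fin (2 * n) → ZMod 2,
          v₁ ∈ dualW → v₂ ∈ dualW → wt v₁ = 2 → wt v₂ = 2 → w = v₁ + v₂ →
          ({v₁, v₂} : Set (Fin (2 * n) → ZMod 2)) = {w₁, w₂}) ∧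
    (∀ w₁ w₂ : Fin (2 * n) → ZMod 2,
      w₁ ∈ dualW → w₂ ∈ dualW → wt w₁ = 2 → wt w₂ = 2 → w₁ ≠ w₂ →
      w₁ + w₂ ∈ dbl '' evenCode n ∧ wt (w₁ + w₂) = 4) := by
  intro dualW
  have hdual_iff : ∀ v : Fin (2 * n) → ZMod 2,
      v ∈ dualW ↔ ∀ c ∈ evenCode n, ∑ i, v i * dbl c i = 0 := by
    intro v
    constructor
    · intro hv c hc; exact hv _ ⟨c, hc, rfl⟩
    · rintro hv w ⟨c, hc, rfl⟩; exact hv c hc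
  have hpmem : ∀ k : Fin n, pvec k ∈ dualW :=
    fun k => (hdual_iff _).mpr fun c _ => pvec_mem k c
  constructor
  · rintro w ⟨c, hc, rfl⟩ hw4
    have hwc : wt c = 2 := by rw [wt_dbl] at hw4; omega
    obtain ⟨a, b, hab, rfl⟩ := eq_sgl_add_of_wt_two hwc
    have hdecomp : dbl (sgl a + sgl b) = pvec a + pvec b := rfl
    refine ⟨pvec a, pvec b, hpmem a, hpmem b, wt_pvec a, wt_pvec b, hdecomp, ?_⟩
    intro v₁ v₂ h1 h2 hw1 hw2 heq
    obtain ⟨p, rfl⟩ := dual_wt2 hn ((hdual_iff v₁).mp h1) hw1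
    obtain ⟨q, rfl⟩ := dual_wt2 hn ((hdual_iff v₂).mp h2) hw2
    have hpq : p ≠ q := by
      rintro rfl
      rw [hdecomp, pvec_add_self] at heq
      have : wt (pvec a + pvec b) = 0 := by rw [heq, wt_zero_fun]
      rw [← hdecomp, hw4] at this
      exact absurd this (by omega)
    have h' : pvec p + pvec q = pvec a + pvec b := by rw [← heq, hdecomp]
    rcases pair_eq hpq hab h' with ⟨rfl, rfl⟩ | ⟨rfl, rfl⟩
    · rfl
    · exact Set.pair_comm _ _
  · intro w₁ w₂ h1 h2 hw1 hw2 hne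
    obtain ⟨p, rfl⟩ := dual_wt2 hn ((hdual_iff w₁).mp h1) hw1
    obtain ⟨q, rfl⟩ := dual_wt2 hn ((hdual_iff w₂).mp h2) hw2
    have hpq : p ≠ q := by rintro rfl; exact hne rfl
    refine ⟨⟨sgl p + sgl q, sgl_add_mem_even hpq, rfl⟩, ?_⟩
    have : pvec p + pvec q = dbl (sgl p + sgl q) := rfl
    rw [this, wt_dbl, wt_sgl_add hpq]
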